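/- For any integers m ≥ l ≥ 0 and n ≥ 0, Σ_{k=0}^n C(n,k)/C(n+m, k+l) = (n+m+1)/((m+1)·C(m,l)). -/

import Mathlib

/-- Key algebraic step: `1/C(m+1,l) + 1/C(m+1,l+1) = (m+2)/((m+1) C(m,l))`. -/
lemma inv_choose_add_inv_choose (m l : ℕ) (hlm : l ≤ m) :
    (1 : ℝ) / ((m + 1).choose l : ℝ) + 1 / ((m + 1).choose (l + 1) : ℝ)
      = ((m : ℝ) + 2) / (((m : ℝ) + 1) * (m.choose l : ℝ)) := by
  have hb : (0 : ℝ) < ((m + 1).choose l : ℝ) := by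
    exact_mod_cast Nat.choose_pos (by omega)
  have hc : (0 : ℝ) < ((m + 1).choose (l + 1) : ℝ) := by
    exact_mod_cast Nat.choose_pos (by omega)
  have ha : (0 : ℝ) < (m.choose l : ℝ) := by
    exact_mod_cast Nat.choose_pos hlm
  have h1 : ((m + 1).choose l : ℝ) * ((m : ℝ) + 1 - l) = (m.choose l : ℝ) * ((m : ℝ) + 1) := by
    have := Nat.choose_mul_succ_eq m l
    have h : ((m.choose l * (m + 1) : ℕ) : ℝ) = (((m + 1).choose l * (m + 1 - l) : ℕ) : ℝ) := by
      exact_mod_cast congrArg (Nat.cast : ℕ → ℝ) this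
    push_cast [Nat.cast_sub (by omega : l ≤ m + 1)] at h
    linarith
  have h2 : ((l : ℝ) + 1) * ((m + 1).choose (l + 1) : ℝ) = ((m : ℝ) + 1) * (m.choose l : ℝ) := by
    have := Nat.add_one_mul_choose_eq m l
    have h : (((m + 1) * m.choose l : ℕ) : ℝ) = (((m + 1).choose (l + 1) * (l + 1) : ℕ) : ℝ) := by
      exact_mod_cast congrArg (Nat.cast : ℕ → ℝ) this
    push_cast at h
    linarith
  have hml : (0 : ℝ) < (m : ℝ) + 1 - l := by
    have : (l : ℝ) ≤ m := by exact_mod_cast hlm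
    linarith
  field_simp
  nlinarith [mul_pos hb hc, mul_pos ha hb, mul_pos ha hc,
    mul_pos (mul_pos ha hb) hc]

/-- **A binomial coefficient identity** (Lemma 3.1 of Chatterjee, "Central limit theorem
for the free energy of the random field Ising model"): for integers `m ≥ l ≥ 0` and
`n ≥ 0`, `∑_{k=0}^n C(n,k)/C(n+m,k+l) = (n+m+1)/((m+1) C(m,l))`. -/
theorem sum_choose_div_choose (m l n : ℕ) (hlm : l ≤ m) :
    ∑ k ∈ Finset.range (n + 1), (n.choose k : ℝ) / ((n + m).choose (k + l) : ℝ)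
      = ((n : ℝ) + m + 1) / ((m + 1) * (m.choose l : ℝ)) := by
  induction n generalizing m l with
  | zero =>
      have ha : (0 : ℝ) < (m.choose l : ℝ) := by exact_mod_cast Nat.choose_pos hlm
      simp [Nat.choose_zero_right]
      rw [eq_div_iff (by positivity)]
      field_simp
  | succ n ih =>
      have key := inv_choose_add_inv_choose m l hlm
      have ih1 := ih (m + 1) (l + 1) (by omega)
      have ih2 := ih (m + 1) l (by omega)
      rw [Finset.sum_range_succ']
      have hsplit : ∀ k ∈ Finset.range (n + 1),
          ((n + 1).choose (k + 1) : ℝ) / (((n + 1 + m).choose (k + 1 + l)) : ℝ)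
            = (n.choose k : ℝ) / (((n + (m + 1)).choose (k + (l + 1))) : ℝ)
              + (n.choose (k + 1) : ℝ) / (((n + (m + 1)).choose ((k + 1) + l)) : ℝ) := by
        intro k _
        have hp : (n + 1).choose (k + 1) = n.choose k + n.choose (k + 1) :=
          Nat.choose_succ_succ n k
        have e1 : n + 1 + m = n + (m + 1) := by omega
        have e2 : k + 1 + l = k + (l + 1) := by omega
        rw [hp, e1, e2]
        push_cast
        rw [add_div]
      rw [Finset.sum_congr rfl hsplit, Finset.sum_add_distrib]
      have hA : ∑ k ∈ Finset.range (n + 1),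
          (n.choose k : ℝ) / (((n + (m + 1)).choose (k + (l + 1))) : ℝ)
          = ((n : ℝ) + (m + 1) + 1) / (((m : ℝ) + 1 + 1) * ((m + 1).choose (l + 1) : ℝ)) := by
        exact_mod_cast ih1
      have hB : (∑ k ∈ Finset.range (n + 1),
            (n.choose (k + 1) : ℝ) / (((n + (m + 1)).choose ((k + 1) + l)) : ℝ))
            + ((n + 1).choose 0 : ℝ) / (((n + 1 + m).choose (0 + l)) : ℝ)
          = ((n : ℝ) + (m + 1) + 1) / (((m : ℝ) + 1 + 1) * ((m + 1).choose l : ℝ)) := by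
        have hg0 : ((n + 1).choose 0 : ℝ) / (((n + 1 + m).choose (0 + l)) : ℝ)
            = (n.choose 0 : ℝ) / (((n + (m + 1)).choose (0 + l)) : ℝ) := by
          norm_num [show n + 1 + m = n + (m + 1) from by omega]
        have hrec := Finset.sum_range_succ'
          (fun k => (n.choose k : ℝ) / (((n + (m + 1)).choose (k + l)) : ℝ)) (n + 1)
        rw [hg0, ← hrec, Finset.sum_range_succ]
        simp only [Nat.choose_succ_self, Nat.cast_zero, zero_div, add_zero]
        exact_mod_cast ih2
      rw [hA, add_assoc, hB]
      have hb : (0 : ℝ) < ((m + 1).choose l : ℝ) := by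
        exact_mod_cast Nat.choose_pos (by omega)
      have hc : (0 : ℝ) < ((m + 1).choose (l + 1) : ℝ) := by
        exact_mod_cast Nat.choose_pos (by omega)
      have ha : (0 : ℝ) < (m.choose l : ℝ) := by exact_mod_cast Nat.choose_pos hlm
      have hm2 : (0 : ℝ) < (m : ℝ) + 2 := by positivity
      push_cast
      rw [div_add_div _ _ (by positivity) (by positivity)] at key ⊢
      field_simp at key ⊢
      linear_combination ((n : ℝ) + m + 2) * key
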